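/- Let d ≥ 1 be an integer, σ ∈ (0,1) and 1 < p < d/σ. Let (u_n) be measurable functions on ℝ^d with sup_n ‖u_n‖_{Ẇ^{σ,p}} < ∞, and suppose u_n → u pointwise almost everywhere in ℝ^d. Then ‖u‖_{Ẇ^{σ,p}} < ∞ and the Brezis–Lieb splitting holds for the Gagliardo seminorm: ‖u_n‖_{Ẇ^{σ,p}}^p - ‖u‖_{Ẇ^{σ,p}}^p - ‖u_n - u‖_{Ẇ^{σ,p}}^p → 0 as n → ∞. -/

import Mathlib

open MeasureTheory Filter Metric ENNReal

noncomputable section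

abbrev Rd (d : ℕ) := EuclideanSpace ℝ (Fin d)

/-- The critical exponent `p* = dp/(d - σp)`. -/
def pStarFrac (d : ℕ) (σ p : ℝ) : ℝ := d * p / (d - σ * p)

/-- The `p`-th power of the Gagliardo seminorm
`‖u‖_{Ẇ^{σ,p}}^p = ∫∫ |u(x)-u(y)|^p / |x-y|^{d+pσ} dx dy`, valued in `ℝ≥0∞`. -/
def gagliardo (d : ℕ) (σ p : ℝ) (u : Rd d → ℝ) : ℝ≥0∞ :=
  ∫⁻ x, ∫⁻ y, ENNReal.ofReal (|u x - u y| ^ p / ‖x - y‖ ^ ((d : ℝ) + p * σ))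

/-- `u ∈ Ẇ^{σ,p}(ℝ^d)`: `u ∈ L^{p*}` and the Gagliardo seminorm is finite. -/
def MemWFrac (d : ℕ) (σ p : ℝ) (u : Rd d → ℝ) : Prop :=
  MemLp u (ENNReal.ofReal (pStarFrac d σ p)) volume ∧ gagliardo d σ p u < ⊤

/-- The sharp fractional Sobolev constant `S_{d,σ,p}`. -/
def SFrac (d : ℕ) (σ p : ℝ) : ℝ :=
  sInf { r : ℝ | ∃ u, MemWFrac d σ p u ∧ ¬ (u =ᵐ[volume] (fun _ => (0:ℝ))) ∧
    r = (gagliardo d σ p u).toReal /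
      (∫ x, |u x| ^ pStarFrac d σ p) ^ (p / pStarFrac d σ p) }

private lemma two_pow_bound {p : ℝ} (hp : 0 ≤ p) {a b : ℝ} (ha : 0 ≤ a) (hb : 0 ≤ b) :
    (a + b) ^ p ≤ 2 ^ p * (a ^ p + b ^ p) := by
  have h1 : a + b ≤ 2 * max a b := by
    rcases le_total a b with h | h
    · simp [max_eq_right h]; linarith
    · simp [max_eq_left h]; linarith
  calc (a + b) ^ p ≤ (2 * max a b) ^ p :=
        Real.rpow_le_rpow (by positivity) h1 hp
    _ = 2 ^ p * (max a b) ^ p := Real.mul_rpow (by norm_num) (le_max_of_le_left ha)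
    _ ≤ 2 ^ p * (a ^ p + b ^ p) := by
        have h2 : (max a b) ^ p ≤ a ^ p + b ^ p := by
          rcases le_total a b with h | h
          · rw [max_eq_right h]; nlinarith [Real.rpow_nonneg ha p]
          · rw [max_eq_left h]; nlinarith [Real.rpow_nonneg hb p]
        have := Real.rpow_nonneg (show (0:ℝ) ≤ 2 by norm_num) p
        nlinarith

private lemma rpow_abs_sub_le {p : ℝ} (hp : 0 ≤ p) (x y : ℝ) :
    |x - y| ^ p ≤ 2 ^ p * (|x| ^ p + |y| ^ p) := by
  calc |x - y| ^ p ≤ (|x| + |y|) ^ p :=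
        Real.rpow_le_rpow (abs_nonneg _) (abs_sub _ _) hp
    _ ≤ 2 ^ p * (|x| ^ p + |y| ^ p) := two_pow_bound hp (abs_nonneg _) (abs_nonneg _)

private lemma rpow_add_sub_le {p : ℝ} (hp : 1 ≤ p) {ε : ℝ} (hε : 0 < ε) :
    ∃ C : ℝ, 0 ≤ C ∧ ∀ a b : ℝ, 0 ≤ a → 0 ≤ b → (a + b) ^ p - a ^ p ≤ ε * a ^ p + C * b ^ p := by
  have hp0 : 0 ≤ p := le_trans zero_le_one hp
  obtain ⟨δ, hδ0, hδ⟩ : ∃ δ : ℝ, 0 < δ ∧ (1 + δ) ^ p ≤ 1 + ε := by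
    have hcont : Continuous fun t : ℝ => (1 + t) ^ p :=
      (continuous_const.add continuous_id).rpow_const (fun _ => Or.inr hp0)
    have ht : Tendsto (fun t : ℝ => (1 + t) ^ p) (nhdsWithin 0 (Set.Ioi 0)) (nhds 1) := by
      have h0 : Tendsto (fun t : ℝ => (1 + t) ^ p) (nhdsWithin 0 (Set.Ioi 0)) (nhds ((1 + 0:ℝ) ^ p)) :=
        (hcont.tendsto 0).mono_left nhdsWithin_le_nhds
      simpa using h0
    have hev : ∀ᶠ t in nhdsWithin (0:ℝ) (Set.Ioi 0), (1 + t) ^ p < 1 + ε :=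
      ht.eventually_lt_const (by linarith)
    obtain ⟨t, ht1, ht2⟩ := (hev.and (eventually_mem_nhdsWithin)).exists
    exact ⟨t, ht2, ht1.le⟩
  refine ⟨(1 + 1/δ) ^ p, Real.rpow_nonneg (by positivity) p, fun a b ha hb => ?_⟩
  rcases le_or_gt b (δ * a) with h | h
  · have h1 : (a + b) ^ p ≤ ((1 + δ) * a) ^ p :=
      Real.rpow_le_rpow (by linarith) (by nlinarith) hp0
    have h2 : ((1 + δ) * a) ^ p = (1 + δ) ^ p * a ^ p := Real.mul_rpow (by linarith) ha
    have h3 : (1 + δ) ^ p * a ^ p ≤ (1 + ε) * a ^ p := by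
      have := Real.rpow_nonneg ha p
      nlinarith
    have h4 : 0 ≤ (1 + 1/δ) ^ p * b ^ p := by positivity
    nlinarith
  · have h1 : a + b ≤ (1 + 1/δ) * b := by
      have : a ≤ b / δ := by rw [le_div_iff₀ hδ0]; nlinarith
      have hd : b / δ = (1/δ) * b := by ring
      nlinarith [this]
    have h2 : (a + b) ^ p ≤ ((1 + 1/δ) * b) ^ p :=
      Real.rpow_le_rpow (by linarith) h1 hp0
    have h3 : ((1 + 1/δ) * b) ^ p = (1 + 1/δ) ^ p * b ^ p :=
      Real.mul_rpow (by positivity) hb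
    have h4 : 0 ≤ a ^ p := Real.rpow_nonneg ha p
    have h5 : 0 ≤ ε * a ^ p := by positivity
    nlinarith

private lemma abs_rpow_sub_le {p : ℝ} (hp : 1 ≤ p) {ε : ℝ} (hε : 0 < ε) :
    ∃ C : ℝ, 0 ≤ C ∧ ∀ x y : ℝ, abs (|x + y| ^ p - |x| ^ p) ≤ ε * |x| ^ p + C * |y| ^ p := by
  have hp0 : 0 ≤ p := le_trans zero_le_one hp
  have h2 : (0:ℝ) < 2 ^ p := Real.rpow_pos_of_pos two_pos p
  obtain ⟨C, hC0, hC⟩ := rpow_add_sub_le hp (show 0 < ε / 2 ^ p by positivity)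
  have h2ge : (1:ℝ) ≤ 2 ^ p := by
    calc (1:ℝ) = 1 ^ p := (Real.one_rpow p).symm
    _ ≤ 2 ^ p := Real.rpow_le_rpow zero_le_one one_le_two hp0
  refine ⟨C + ε, by positivity, fun x y => ?_⟩
  have hxp : (0:ℝ) ≤ |x| ^ p := Real.rpow_nonneg (abs_nonneg x) p
  have hyp : (0:ℝ) ≤ |y| ^ p := Real.rpow_nonneg (abs_nonneg y) p
  have hxyp : (0:ℝ) ≤ |x + y| ^ p := Real.rpow_nonneg (abs_nonneg _) p
  rw [abs_sub_le_iff]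
  constructor
  · -- |x+y|^p - |x|^p ≤ ...
    have h1 : |x + y| ^ p ≤ (|x| + |y|) ^ p :=
      Real.rpow_le_rpow (abs_nonneg _) (abs_add_le x y) hp0
    have h3 := hC |x| |y| (abs_nonneg x) (abs_nonneg y)
    have hmono : ε / 2 ^ p ≤ ε := by
      rw [div_le_iff₀ h2]; nlinarith
    nlinarith
  · -- |x|^p - |x+y|^p ≤ ...
    have h1 : |x| ^ p ≤ (|x + y| + |y|) ^ p := by
      apply Real.rpow_le_rpow (abs_nonneg x) _ hp0
      calc |x| = |(x + y) + (-y)| := by ring_nf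
      _ ≤ |x + y| + |(-y)| := abs_add_le _ _
      _ = |x + y| + |y| := by rw [abs_neg]
    have h3 := hC |x + y| |y| (abs_nonneg _) (abs_nonneg y)
    have h4 : |x + y| ^ p ≤ 2 ^ p * (|x| ^ p + |y| ^ p) := by
      calc |x + y| ^ p ≤ (|x| + |y|) ^ p :=
            Real.rpow_le_rpow (abs_nonneg _) (abs_add_le x y) hp0
      _ ≤ 2 ^ p * (|x| ^ p + |y| ^ p) := two_pow_bound hp0 (abs_nonneg _) (abs_nonneg _)
    have h5 : ε / 2 ^ p * |x + y| ^ p ≤ ε / 2 ^ p * (2 ^ p * (|x| ^ p + |y| ^ p)) := by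
      apply mul_le_mul_of_nonneg_left h4 (by positivity)
    have h6 : ε / 2 ^ p * (2 ^ p * (|x| ^ p + |y| ^ p)) = ε * (|x| ^ p + |y| ^ p) := by
      field_simp
    nlinarith


private lemma brezisLieb {α : Type*} [MeasurableSpace α] {μ : Measure α} {p : ℝ} (hp : 1 ≤ p)
    {f : ℕ → α → ℝ} {g : α → ℝ} (hf : ∀ n, AEMeasurable (f n) μ) (hg : AEMeasurable g μ)
    {M : ℝ≥0∞} (hM : M ≠ ⊤) (hbd : ∀ n, ∫⁻ a, ENNReal.ofReal (|f n a| ^ p) ∂μ ≤ M)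
    (hae : ∀ᵐ a ∂μ, Tendsto (fun n => f n a) atTop (nhds (g a))) :
    (∫⁻ a, ENNReal.ofReal (|g a| ^ p) ∂μ ≤ M) ∧
    (∀ n, ∫⁻ a, ENNReal.ofReal (|f n a - g a| ^ p) ∂μ ≤ ENNReal.ofReal (2 ^ p) * (M + M)) ∧
    Tendsto (fun n => ∫⁻ a, ENNReal.ofReal (abs (|f n a| ^ p - |f n a - g a| ^ p - |g a| ^ p)) ∂μ)
      atTop (nhds 0) := by
  have hp0 : (0:ℝ) ≤ p := le_trans zero_le_one hp
  have cont : Continuous fun t : ℝ => |t| ^ p :=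
    continuous_abs.rpow_const (fun _ => Or.inr hp0)
  have mφ : ∀ n, AEMeasurable (fun a => ENNReal.ofReal (|f n a| ^ p)) μ := fun n => by fun_prop
  have mψ : AEMeasurable (fun a => ENNReal.ofReal (|g a| ^ p)) μ := by fun_prop
  have mχ : ∀ n, AEMeasurable (fun a => ENNReal.ofReal (|f n a - g a| ^ p)) μ := fun n => by fun_prop
  -- Fatou bound for g
  have hgle : ∫⁻ a, ENNReal.ofReal (|g a| ^ p) ∂μ ≤ M := by
    have hpt : ∀ᵐ a ∂μ, ENNReal.ofReal (|g a| ^ p)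
        = liminf (fun n => ENNReal.ofReal (|f n a| ^ p)) atTop := by
      refine hae.mono fun a ha => ?_
      have : Tendsto (fun n => ENNReal.ofReal (|f n a| ^ p)) atTop
          (nhds (ENNReal.ofReal (|g a| ^ p))) :=
        ((ENNReal.continuous_ofReal.comp cont).tendsto (g a)).comp ha
      exact this.liminf_eq.symm
    calc ∫⁻ a, ENNReal.ofReal (|g a| ^ p) ∂μ
        = ∫⁻ a, liminf (fun n => ENNReal.ofReal (|f n a| ^ p)) atTop ∂μ := lintegral_congr_ae hpt
      _ ≤ liminf (fun n => ∫⁻ a, ENNReal.ofReal (|f n a| ^ p) ∂μ) atTop := lintegral_liminf_le' mφ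
      _ ≤ M := by
          refine le_trans (liminf_le_liminf (Eventually.of_forall hbd)) ?_
          simp
  -- bound on the differences
  have hχ : ∀ n, ∫⁻ a, ENNReal.ofReal (|f n a - g a| ^ p) ∂μ ≤ ENNReal.ofReal (2 ^ p) * (M + M) := by
    intro n
    have hpt : ∀ a, ENNReal.ofReal (|f n a - g a| ^ p)
        ≤ ENNReal.ofReal (2 ^ p) * (ENNReal.ofReal (|f n a| ^ p) + ENNReal.ofReal (|g a| ^ p)) := by
      intro a
      have h1 := rpow_abs_sub_le hp0 (f n a) (g a)
      calc ENNReal.ofReal (|f n a - g a| ^ p)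
          ≤ ENNReal.ofReal (2 ^ p * (|f n a| ^ p + |g a| ^ p)) := ENNReal.ofReal_le_ofReal h1
        _ = ENNReal.ofReal (2 ^ p) * (ENNReal.ofReal (|f n a| ^ p) + ENNReal.ofReal (|g a| ^ p)) := by
            rw [ENNReal.ofReal_mul (by positivity),
              ENNReal.ofReal_add (by positivity) (by positivity)]
    calc ∫⁻ a, ENNReal.ofReal (|f n a - g a| ^ p) ∂μ
        ≤ ∫⁻ a, ENNReal.ofReal (2 ^ p) * (ENNReal.ofReal (|f n a| ^ p) + ENNReal.ofReal (|g a| ^ p)) ∂μ :=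
          lintegral_mono hpt
      _ = ENNReal.ofReal (2 ^ p) * ∫⁻ a, (ENNReal.ofReal (|f n a| ^ p) + ENNReal.ofReal (|g a| ^ p)) ∂μ :=
          lintegral_const_mul' _ _ ENNReal.ofReal_ne_top
      _ = ENNReal.ofReal (2 ^ p) *
          ((∫⁻ a, ENNReal.ofReal (|f n a| ^ p) ∂μ) + ∫⁻ a, ENNReal.ofReal (|g a| ^ p) ∂μ) := by
          rw [lintegral_add_left' (mφ n)]
      _ ≤ ENNReal.ofReal (2 ^ p) * (M + M) := by
          exact mul_le_mul_right (add_le_add (hbd n) hgle) _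
  refine ⟨hgle, hχ, ?_⟩
  -- main convergence
  have claim : ∀ e : ℝ, 0 < e → ∀ᶠ n in atTop,
      ∫⁻ a, ENNReal.ofReal (abs (|f n a| ^ p - |f n a - g a| ^ p - |g a| ^ p)) ∂μ
        ≤ ENNReal.ofReal e := by
    intro e he
    set K : ℝ≥0∞ := ENNReal.ofReal (2 ^ p) * (M + M) with hKdef
    have hKtop : K ≠ ⊤ := by
      refine ENNReal.mul_ne_top ENNReal.ofReal_ne_top ?_
      simp [ENNReal.add_ne_top, hM]
    set k : ℝ := K.toReal with hkdef
    have hk0 : 0 ≤ k := ENNReal.toReal_nonneg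
    set εs : ℝ := e / (2 * (k + 1)) with hεsdef
    have hεs : 0 < εs := by positivity
    obtain ⟨C, hC0, hC⟩ := abs_rpow_sub_le hp hεs
    set W : ℕ → α → ℝ≥0∞ := fun n a =>
      ENNReal.ofReal (abs (|f n a| ^ p - |f n a - g a| ^ p - |g a| ^ p) - εs * |f n a - g a| ^ p)
      with hWdef
    have hWmeas : ∀ n, AEMeasurable (W n) μ := fun n => by
      simp only [hWdef]; fun_prop
    have hWbound : ∀ n, W n ≤ᵐ[μ] fun a => ENNReal.ofReal ((C + 1) * |g a| ^ p) := by
      intro n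
      refine Eventually.of_forall fun a => ?_
      apply ENNReal.ofReal_le_ofReal
      have h1 := hC (f n a - g a) (g a)
      have h2 : f n a - g a + g a = f n a := by ring
      rw [h2] at h1
      have h3 : abs (|f n a| ^ p - |f n a - g a| ^ p - |g a| ^ p)
          ≤ abs (|f n a| ^ p - |f n a - g a| ^ p) + |g a| ^ p := by
        have := abs_sub (|f n a| ^ p - |f n a - g a| ^ p) (|g a| ^ p)
        have h5 : abs (|g a| ^ p) = |g a| ^ p := abs_of_nonneg (Real.rpow_nonneg (abs_nonneg _) p)
        linarith
      nlinarith
    have hWfin : ∫⁻ a, ENNReal.ofReal ((C + 1) * |g a| ^ p) ∂μ ≠ ⊤ := by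
      have : ∫⁻ a, ENNReal.ofReal ((C + 1) * |g a| ^ p) ∂μ
          = ENNReal.ofReal (C + 1) * ∫⁻ a, ENNReal.ofReal (|g a| ^ p) ∂μ := by
        rw [← lintegral_const_mul' _ _ ENNReal.ofReal_ne_top]
        congr 1; funext a
        rw [← ENNReal.ofReal_mul (by positivity)]
      rw [this]
      exact ENNReal.mul_ne_top ENNReal.ofReal_ne_top
        (lt_of_le_of_lt hgle (lt_top_iff_ne_top.mpr hM)).ne
    have hWlim : ∀ᵐ a ∂μ, Tendsto (fun n => W n a) atTop (nhds 0) := by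
      refine hae.mono fun a ha => ?_
      have h1 : Tendsto (fun n => |f n a| ^ p) atTop (nhds (|g a| ^ p)) :=
        (cont.tendsto (g a)).comp ha
      have h2 : Tendsto (fun n => |f n a - g a| ^ p) atTop (nhds 0) := by
        have h3 : Tendsto (fun n => f n a - g a) atTop (nhds 0) := by
          simpa using ha.sub (tendsto_const_nhds (x := g a))
        have := (cont.tendsto 0).comp h3
        simpa [Function.comp_def, Real.zero_rpow (by positivity : p ≠ 0)] using this
      have h4 : Tendsto (fun n =>
          abs (|f n a| ^ p - |f n a - g a| ^ p - |g a| ^ p) - εs * |f n a - g a| ^ p) atTop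
          (nhds 0) := by
        have hA : Tendsto (fun n => |f n a| ^ p - |f n a - g a| ^ p - |g a| ^ p) atTop
            (nhds (|g a| ^ p - 0 - |g a| ^ p)) :=
          (h1.sub h2).sub tendsto_const_nhds
        have := hA.abs.sub (h2.const_mul εs)
        simpa using this
      have := (ENNReal.continuous_ofReal.tendsto 0).comp h4
      simpa [Function.comp_def, hWdef] using this
    have hWint : Tendsto (fun n => ∫⁻ a, W n a ∂μ) atTop (nhds 0) := by
      have h0 := tendsto_lintegral_of_dominated_convergence'
        (F := W) (f := fun _ => (0:ℝ≥0∞)) _ hWmeas hWbound hWfin hWlim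
      simpa using h0
    have hev : ∀ᶠ n in atTop, ∫⁻ a, W n a ∂μ < ENNReal.ofReal (e/2) :=
      hWint.eventually_lt_const (by simp [ENNReal.ofReal_pos]; positivity)
    refine hev.mono fun n hn => ?_
    have hsplit : ∀ a, ENNReal.ofReal (abs (|f n a| ^ p - |f n a - g a| ^ p - |g a| ^ p))
        ≤ W n a + ENNReal.ofReal εs * ENNReal.ofReal (|f n a - g a| ^ p) := by
      intro a
      have h1 : abs (|f n a| ^ p - |f n a - g a| ^ p - |g a| ^ p)
          = (abs (|f n a| ^ p - |f n a - g a| ^ p - |g a| ^ p) - εs * |f n a - g a| ^ p)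
            + εs * |f n a - g a| ^ p := by ring
      rw [h1, ← ENNReal.ofReal_mul hεs.le]
      exact ENNReal.ofReal_add_le
    calc ∫⁻ a, ENNReal.ofReal (abs (|f n a| ^ p - |f n a - g a| ^ p - |g a| ^ p)) ∂μ
        ≤ ∫⁻ a, (W n a + ENNReal.ofReal εs * ENNReal.ofReal (|f n a - g a| ^ p)) ∂μ :=
          lintegral_mono hsplit
      _ = (∫⁻ a, W n a ∂μ) + ∫⁻ a, ENNReal.ofReal εs * ENNReal.ofReal (|f n a - g a| ^ p) ∂μ :=
          lintegral_add_left' (hWmeas n) _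
      _ = (∫⁻ a, W n a ∂μ) + ENNReal.ofReal εs * ∫⁻ a, ENNReal.ofReal (|f n a - g a| ^ p) ∂μ := by
          rw [lintegral_const_mul' _ _ ENNReal.ofReal_ne_top]
      _ ≤ ENNReal.ofReal (e/2) + ENNReal.ofReal εs * K :=
          add_le_add hn.le (mul_le_mul_right (hχ n) _)
      _ ≤ ENNReal.ofReal (e/2) + ENNReal.ofReal (e/2) := by
          refine add_le_add le_rfl ?_
          have hKeq : K = ENNReal.ofReal k := (ENNReal.ofReal_toReal hKtop).symm
          rw [hKeq, ← ENNReal.ofReal_mul hεs.le]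
          apply ENNReal.ofReal_le_ofReal
          rw [hεsdef, div_mul_eq_mul_div, div_le_iff₀ (by positivity)]
          nlinarith
      _ = ENNReal.ofReal e := by
          rw [← ENNReal.ofReal_add (by positivity) (by positivity)]
          norm_num
  rw [ENNReal.tendsto_nhds_zero]
  intro ε hε
  rcases eq_or_ne ε ⊤ with rfl | hεtop
  · exact Eventually.of_forall fun n => le_top
  · have h0 := claim ε.toReal (ENNReal.toReal_pos hε.ne' hεtop)
    refine h0.mono fun n hn => ?_
    rwa [ENNReal.ofReal_toReal hεtop] at hn

/-- Brezis–Lieb lemma for the Gagliardo seminorm: if `(u_n)` is bounded in `Ẇ^{σ,p}`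
and `u_n → u` a.e., then `‖u‖_{Ẇ^{σ,p}} < ∞` and
`‖u_n‖_{Ẇ^{σ,p}}^p - ‖u‖_{Ẇ^{σ,p}}^p - ‖u_n - u‖_{Ẇ^{σ,p}}^p → 0`. -/
theorem brezis_lieb_gagliardo (d : ℕ) (σ p : ℝ)
    (hd : 1 ≤ d) (hσ : σ ∈ Set.Ioo (0:ℝ) 1) (hp1 : 1 < p) (hps : p < (d : ℝ) / σ)
    (u : ℕ → Rd d → ℝ) (u₀ : Rd d → ℝ)
    (hmeas : ∀ n, Measurable (u n))
    (hbdd : ∃ M : ℝ, ∀ n, gagliardo d σ p (u n) ≤ ENNReal.ofReal M)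
    (hae : ∀ᵐ x ∂(volume : Measure (Rd d)), Tendsto (fun n => u n x) atTop (nhds (u₀ x))) :
    gagliardo d σ p u₀ < ⊤ ∧
    Tendsto (fun n =>
        (gagliardo d σ p (u n)).toReal
        - (gagliardo d σ p u₀).toReal
        - (gagliardo d σ p (fun x => u n x - u₀ x)).toReal)
      atTop (nhds 0) := by
  obtain ⟨M, hM⟩ := hbdd
  have hp0 : (0:ℝ) < p := lt_trans one_pos hp1
  set c : ℝ := (d:ℝ)/p + σ with hc
  -- pointwise identity
  have idlem : ∀ (a : ℝ) (x y : Rd d),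
      |a / ‖x - y‖ ^ c| ^ p = |a| ^ p / ‖x - y‖ ^ ((d:ℝ) + p * σ) := by
    intro a x y
    have hs : (0:ℝ) ≤ ‖x - y‖ := norm_nonneg _
    have hsc : (0:ℝ) ≤ ‖x - y‖ ^ c := Real.rpow_nonneg hs c
    have hcp : c * p = (d:ℝ) + p * σ := by
      rw [hc]; field_simp
    rw [abs_div, abs_of_nonneg hsc, Real.div_rpow (abs_nonneg a) hsc,
      ← Real.rpow_mul hs, hcp]
  set ν : Measure (Rd d × Rd d) := (volume : Measure (Rd d)).prod volume with hν
  -- generic measurability helpers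
  have hq1 : Measurable (fun z : Rd d × Rd d => ‖z.1 - z.2‖ ^ ((d:ℝ) + p * σ)) := by
    have : Continuous (fun z : Rd d × Rd d => ‖z.1 - z.2‖ ^ ((d:ℝ) + p * σ)) :=
      (continuous_fst.sub continuous_snd).norm.rpow_const (fun _ => Or.inr (by
        have h1 : (0:ℝ) ≤ (d:ℝ) := Nat.cast_nonneg d
        nlinarith [hσ.1, hp0]))
    exact this.measurable
  have hq2 : Measurable (fun z : Rd d × Rd d => ‖z.1 - z.2‖ ^ c) := by
    have hc0 : (0:ℝ) ≤ c := by
      rw [hc]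
      have h1 : (0:ℝ) ≤ (d:ℝ)/p := div_nonneg (Nat.cast_nonneg d) hp0.le
      linarith [hσ.1]
    have : Continuous (fun z : Rd d × Rd d => ‖z.1 - z.2‖ ^ c) :=
      (continuous_fst.sub continuous_snd).norm.rpow_const (fun _ => Or.inr hc0)
    exact this.measurable
  have key1 : ∀ w q : Rd d × Rd d → ℝ, AEMeasurable w ν → Measurable q →
      AEMeasurable (fun z => ENNReal.ofReal (|w z| ^ p / q z)) ν := by
    intro w q hw hq; fun_prop
  have key2 : ∀ w q : Rd d × Rd d → ℝ, AEMeasurable w ν → Measurable q →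
      AEMeasurable (fun z => w z / q z) ν := by
    intro w q hw hq; fun_prop
  have key3 : ∀ w : Rd d × Rd d → ℝ, AEMeasurable w ν →
      AEMeasurable (fun z => ENNReal.ofReal (|w z| ^ p)) ν := by
    intro w hw; fun_prop
  have hu₀ : AEMeasurable u₀ (volume : Measure (Rd d)) :=
    aemeasurable_of_tendsto_metrizable_ae atTop (fun n => (hmeas n).aemeasurable) hae
  -- rewriting the Gagliardo seminorm as an integral over the product space
  have gag_eq : ∀ v : Rd d → ℝ, AEMeasurable v (volume : Measure (Rd d)) →
      gagliardo d σ p v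
        = ∫⁻ z, ENNReal.ofReal (|(v z.1 - v z.2) / ‖z.1 - z.2‖ ^ c| ^ p) ∂ν := by
    intro v hv
    have hmeas2 : AEMeasurable (fun z : Rd d × Rd d =>
        ENNReal.ofReal (|v z.1 - v z.2| ^ p / ‖z.1 - z.2‖ ^ ((d:ℝ) + p * σ))) ν :=
      key1 _ _ (hv.comp_fst.sub hv.comp_snd) hq1
    rw [gagliardo, ← lintegral_prod _ hmeas2]
    exact (lintegral_congr fun z => by rw [idlem]).symm
  set F : ℕ → Rd d × Rd d → ℝ :=
    fun n z => (u n z.1 - u n z.2) / ‖z.1 - z.2‖ ^ c with hF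
  set G : Rd d × Rd d → ℝ :=
    fun z => (u₀ z.1 - u₀ z.2) / ‖z.1 - z.2‖ ^ c with hG
  have hAeq : ∀ n, gagliardo d σ p (u n) = ∫⁻ z, ENNReal.ofReal (|F n z| ^ p) ∂ν :=
    fun n => gag_eq (u n) (hmeas n).aemeasurable
  have hBeq : gagliardo d σ p u₀ = ∫⁻ z, ENNReal.ofReal (|G z| ^ p) ∂ν :=
    gag_eq u₀ hu₀
  have hCeq : ∀ n, gagliardo d σ p (fun x => u n x - u₀ x)
      = ∫⁻ z, ENNReal.ofReal (|F n z - G z| ^ p) ∂ν := by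
    intro n
    rw [gag_eq (fun x => u n x - u₀ x) ((hmeas n).aemeasurable.sub hu₀)]
    refine lintegral_congr fun z => ?_
    have : F n z - G z = ((u n z.1 - u₀ z.1) - (u n z.2 - u₀ z.2)) / ‖z.1 - z.2‖ ^ c := by
      rw [hF, hG]
      rw [div_sub_div_same]
      ring_nf
    rw [this]
  -- measurability on the product space
  have hFmeas : ∀ n, AEMeasurable (F n) ν := fun n =>
    key2 _ _ ((hmeas n).aemeasurable.comp_fst.sub (hmeas n).aemeasurable.comp_snd) hq2
  have hGmeas : AEMeasurable G ν :=
    key2 _ _ (hu₀.comp_fst.sub hu₀.comp_snd) hq2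
  -- a.e. convergence on the product space
  have haeν : ∀ᵐ z ∂ν, Tendsto (fun n => F n z) atTop (nhds (G z)) := by
    have h1 : ∀ᵐ z ∂ν, Tendsto (fun n => u n z.1) atTop (nhds (u₀ z.1)) :=
      Measure.quasiMeasurePreserving_fst.ae hae
    have h2 : ∀ᵐ z ∂ν, Tendsto (fun n => u n z.2) atTop (nhds (u₀ z.2)) :=
      Measure.quasiMeasurePreserving_snd.ae hae
    filter_upwards [h1, h2] with z hz1 hz2
    exact (hz1.sub hz2).div_const _
  have hbd' : ∀ n, ∫⁻ z, ENNReal.ofReal (|F n z| ^ p) ∂ν ≤ ENNReal.ofReal M := by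
    intro n; rw [← hAeq n]; exact hM n
  obtain ⟨hBle, hχ, hD⟩ := brezisLieb hp1.le hFmeas hGmeas ENNReal.ofReal_ne_top hbd' haeν
  have hBfin : gagliardo d σ p u₀ < ⊤ := by
    rw [hBeq]; exact lt_of_le_of_lt hBle ENNReal.ofReal_lt_top
  refine ⟨hBfin, ?_⟩
  -- finiteness
  have mφ : ∀ n, AEMeasurable (fun z => ENNReal.ofReal (|F n z| ^ p)) ν := fun n =>
    key3 _ (hFmeas n)
  have mψ : AEMeasurable (fun z => ENNReal.ofReal (|G z| ^ p)) ν := key3 _ hGmeas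
  have mχ : ∀ n, AEMeasurable (fun z => ENNReal.ofReal (|F n z - G z| ^ p)) ν := fun n =>
    key3 _ ((hFmeas n).sub hGmeas)
  have hAfin : ∀ n, gagliardo d σ p (u n) ≠ ⊤ :=
    fun n => (lt_of_le_of_lt (hM n) ENNReal.ofReal_lt_top).ne
  have hCfin : ∀ n, gagliardo d σ p (fun x => u n x - u₀ x) ≠ ⊤ := by
    intro n
    rw [hCeq n]
    exact (lt_of_le_of_lt (hχ n) (by
      exact ENNReal.mul_lt_top ENNReal.ofReal_lt_top
        (by simp [ENNReal.add_lt_top, ENNReal.ofReal_lt_top]))).ne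
  set D : ℕ → ℝ≥0∞ := fun n =>
    ∫⁻ z, ENNReal.ofReal (abs (|F n z| ^ p - |F n z - G z| ^ p - |G z| ^ p)) ∂ν with hDdef
  have hDfin : ∀ n, D n ≠ ⊤ := by
    intro n
    have hpt : ∀ z, ENNReal.ofReal (abs (|F n z| ^ p - |F n z - G z| ^ p - |G z| ^ p))
        ≤ ENNReal.ofReal (|F n z| ^ p)
          + (ENNReal.ofReal (|F n z - G z| ^ p) + ENNReal.ofReal (|G z| ^ p)) := by
      intro z
      have h1 : abs (|F n z| ^ p - |F n z - G z| ^ p - |G z| ^ p)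
          ≤ |F n z| ^ p + (|F n z - G z| ^ p + |G z| ^ p) := by
        have n1 : (0:ℝ) ≤ |F n z| ^ p := Real.rpow_nonneg (abs_nonneg _) p
        have n2 : (0:ℝ) ≤ |F n z - G z| ^ p := Real.rpow_nonneg (abs_nonneg _) p
        have n3 : (0:ℝ) ≤ |G z| ^ p := Real.rpow_nonneg (abs_nonneg _) p
        rw [abs_le]
        constructor <;> nlinarith
      calc ENNReal.ofReal (abs (|F n z| ^ p - |F n z - G z| ^ p - |G z| ^ p))
          ≤ ENNReal.ofReal (|F n z| ^ p + (|F n z - G z| ^ p + |G z| ^ p)) :=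
            ENNReal.ofReal_le_ofReal h1
        _ ≤ _ := le_trans ENNReal.ofReal_add_le (add_le_add le_rfl ENNReal.ofReal_add_le)
    have : D n ≤ gagliardo d σ p (u n)
        + (gagliardo d σ p (fun x => u n x - u₀ x) + gagliardo d σ p u₀) := by
      rw [hDdef, hAeq n, hCeq n, hBeq]
      calc ∫⁻ z, ENNReal.ofReal (abs (|F n z| ^ p - |F n z - G z| ^ p - |G z| ^ p)) ∂ν
          ≤ ∫⁻ z, (ENNReal.ofReal (|F n z| ^ p)
            + (ENNReal.ofReal (|F n z - G z| ^ p) + ENNReal.ofReal (|G z| ^ p))) ∂ν :=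
            lintegral_mono hpt
        _ = _ := by
            rw [lintegral_add_left' (mφ n), lintegral_add_left' (mχ n)]
    exact (lt_of_le_of_lt this (by
      rw [ENNReal.add_lt_top, ENNReal.add_lt_top]
      exact ⟨(hAfin n).lt_top, (hCfin n).lt_top, hBfin⟩)).ne
  -- the two ENNReal inequalities
  have ineq1 : ∀ n, gagliardo d σ p (u n)
      ≤ gagliardo d σ p (fun x => u n x - u₀ x) + gagliardo d σ p u₀ + D n := by
    intro n
    rw [hAeq n, hCeq n, hBeq, hDdef]
    have hpt : ∀ z, ENNReal.ofReal (|F n z| ^ p)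
        ≤ ENNReal.ofReal (|F n z - G z| ^ p) + ENNReal.ofReal (|G z| ^ p)
          + ENNReal.ofReal (abs (|F n z| ^ p - |F n z - G z| ^ p - |G z| ^ p)) := by
      intro z
      have h1 : |F n z| ^ p ≤ |F n z - G z| ^ p + |G z| ^ p
          + abs (|F n z| ^ p - |F n z - G z| ^ p - |G z| ^ p) := by
        have := le_abs_self (|F n z| ^ p - |F n z - G z| ^ p - |G z| ^ p)
        linarith
      have n2 : (0:ℝ) ≤ |F n z - G z| ^ p := Real.rpow_nonneg (abs_nonneg _) p
      have n3 : (0:ℝ) ≤ |G z| ^ p := Real.rpow_nonneg (abs_nonneg _) p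
      calc ENNReal.ofReal (|F n z| ^ p)
          ≤ ENNReal.ofReal (|F n z - G z| ^ p + |G z| ^ p
            + abs (|F n z| ^ p - |F n z - G z| ^ p - |G z| ^ p)) := ENNReal.ofReal_le_ofReal h1
        _ = _ := by
            rw [ENNReal.ofReal_add (by positivity) (abs_nonneg _), ENNReal.ofReal_add n2 n3]
    calc ∫⁻ z, ENNReal.ofReal (|F n z| ^ p) ∂ν
        ≤ ∫⁻ z, (ENNReal.ofReal (|F n z - G z| ^ p) + ENNReal.ofReal (|G z| ^ p)
          + ENNReal.ofReal (abs (|F n z| ^ p - |F n z - G z| ^ p - |G z| ^ p))) ∂ν :=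
          lintegral_mono hpt
      _ = _ := by
          rw [lintegral_add_left' (f := fun z => ENNReal.ofReal (|F n z - G z| ^ p) + ENNReal.ofReal (|G z| ^ p)) ((mχ n).add mψ), lintegral_add_left' (mχ n)]
  have ineq2 : ∀ n, gagliardo d σ p (fun x => u n x - u₀ x) + gagliardo d σ p u₀
      ≤ gagliardo d σ p (u n) + D n := by
    intro n
    rw [hAeq n, hCeq n, hBeq, hDdef]
    have hpt : ∀ z, ENNReal.ofReal (|F n z - G z| ^ p) + ENNReal.ofReal (|G z| ^ p)
        ≤ ENNReal.ofReal (|F n z| ^ p)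
          + ENNReal.ofReal (abs (|F n z| ^ p - |F n z - G z| ^ p - |G z| ^ p)) := by
      intro z
      have n1 : (0:ℝ) ≤ |F n z| ^ p := Real.rpow_nonneg (abs_nonneg _) p
      have n2 : (0:ℝ) ≤ |F n z - G z| ^ p := Real.rpow_nonneg (abs_nonneg _) p
      have n3 : (0:ℝ) ≤ |G z| ^ p := Real.rpow_nonneg (abs_nonneg _) p
      have h1 : |F n z - G z| ^ p + |G z| ^ p
          ≤ |F n z| ^ p + abs (|F n z| ^ p - |F n z - G z| ^ p - |G z| ^ p) := by
        have := neg_abs_le (|F n z| ^ p - |F n z - G z| ^ p - |G z| ^ p)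
        linarith
      calc ENNReal.ofReal (|F n z - G z| ^ p) + ENNReal.ofReal (|G z| ^ p)
          = ENNReal.ofReal (|F n z - G z| ^ p + |G z| ^ p) := (ENNReal.ofReal_add n2 n3).symm
        _ ≤ ENNReal.ofReal (|F n z| ^ p
            + abs (|F n z| ^ p - |F n z - G z| ^ p - |G z| ^ p)) := ENNReal.ofReal_le_ofReal h1
        _ = _ := ENNReal.ofReal_add n1 (abs_nonneg _)
    calc (∫⁻ z, ENNReal.ofReal (|F n z - G z| ^ p) ∂ν) + ∫⁻ z, ENNReal.ofReal (|G z| ^ p) ∂ν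
        = ∫⁻ z, (ENNReal.ofReal (|F n z - G z| ^ p) + ENNReal.ofReal (|G z| ^ p)) ∂ν :=
          (lintegral_add_left' (mχ n) _).symm
      _ ≤ ∫⁻ z, (ENNReal.ofReal (|F n z| ^ p)
          + ENNReal.ofReal (abs (|F n z| ^ p - |F n z - G z| ^ p - |G z| ^ p))) ∂ν :=
          lintegral_mono hpt
      _ = _ := lintegral_add_left' (mφ n) _
  -- pass to real numbers
  have hkey : ∀ n, abs ((gagliardo d σ p (u n)).toReal - (gagliardo d σ p u₀).toReal
      - (gagliardo d σ p (fun x => u n x - u₀ x)).toReal) ≤ (D n).toReal := by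
    intro n
    have h1 : (gagliardo d σ p (u n)).toReal
        ≤ (gagliardo d σ p (fun x => u n x - u₀ x)).toReal + (gagliardo d σ p u₀).toReal
          + (D n).toReal := by
      have := ineq1 n
      have hr := ENNReal.toReal_mono (by
        exact ENNReal.add_ne_top.mpr ⟨ENNReal.add_ne_top.mpr ⟨hCfin n, hBfin.ne⟩, hDfin n⟩) this
      rwa [ENNReal.toReal_add (ENNReal.add_ne_top.mpr ⟨hCfin n, hBfin.ne⟩) (hDfin n),
        ENNReal.toReal_add (hCfin n) hBfin.ne] at hr
    have h2 : (gagliardo d σ p (fun x => u n x - u₀ x)).toReal + (gagliardo d σ p u₀).toReal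
        ≤ (gagliardo d σ p (u n)).toReal + (D n).toReal := by
      have := ineq2 n
      have hr := ENNReal.toReal_mono (ENNReal.add_ne_top.mpr ⟨hAfin n, hDfin n⟩) this
      rwa [ENNReal.toReal_add (hCfin n) hBfin.ne, ENNReal.toReal_add (hAfin n) (hDfin n)] at hr
    rw [abs_le]
    constructor <;> linarith
  have hDto : Tendsto (fun n => (D n).toReal) atTop (nhds 0) := by
    have := (ENNReal.tendsto_toReal (a := 0) (by simp)).comp hD
    simpa [Function.comp_def] using this
  have := squeeze_zero_norm (f := fun n =>
      (gagliardo d σ p (u n)).toReal - (gagliardo d σ p u₀).toReal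
      - (gagliardo d σ p (fun x => u n x - u₀ x)).toReal)
    (fun n => by simpa [Real.norm_eq_abs] using hkey n) hDto
  exact this
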